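/- arXiv:1601.07712 — 4 statements merged into one kernel-verified Lean document; each statement's English description precedes it below -/
import Mathlib

section
/- Let N ∈ ℕ and let ρ ∈ L¹(ℝ) be nonnegative with finite moments up to order N, i.e. ∫_ℝ |x|^k ρ(x) dx < ∞ for k = 0, …, N. Let S = S[ρ] be given by S(x) = (1/2) ∫_ℝ e^{−|x−y|} ρ(y) dy. Then S has finite moments up to order N, and, setting R_k = ∫_ℝ x^k ρ(x) dx and S_k = ∫_ℝ x^k S(x) dx, the relation S_k = R_k + k(k−1) S_{k−2} holds for every k = 0, …, N (with the convention that the term k(k−1)S_{k−2} vanishes for k = 0, 1). -/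
open MeasureTheory Real

/-- `S[ρ](x) = (1/2) ∫ e^{-|x-y|} ρ(y) dy`. -/
noncomputable def Schem (ρ : ℝ → ℝ) (x : ℝ) : ℝ :=
  (1 / 2) * ∫ y : ℝ, Real.exp (-|x - y|) * ρ y

section Aux
open Set


lemma intOnIoi (j : ℕ) : IntegrableOn (fun t : ℝ => t ^ j * Real.exp (-t)) (Ioi 0) := by
  have h := Real.GammaIntegral_convergent (s := (j : ℝ) + 1) (by positivity)
  refine (h.congr_fun (fun x hx => ?_) measurableSet_Ioi)
  beta_reduce; rw [add_sub_cancel_right, Real.rpow_natCast, mul_comm]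

lemma intIoi_val (j : ℕ) : ∫ t in Ioi (0:ℝ), t ^ j * Real.exp (-t) = (j.factorial : ℝ) := by
  have h := Real.Gamma_eq_integral (s := (j : ℝ) + 1) (by positivity)
  rw [Real.Gamma_nat_eq_factorial] at h
  rw [h]
  refine setIntegral_congr_fun measurableSet_Ioi (fun x hx => ?_)
  rw [add_sub_cancel_right, Real.rpow_natCast, mul_comm]

lemma Ig (j : ℕ) : Integrable (fun t : ℝ => t ^ j * Real.exp (-|t|)) := by
  rw [← integrableOn_univ, ← Iic_union_Ioi (a := (0:ℝ)), integrableOn_union]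
  constructor
  · have m : MeasurableEmbedding fun x : ℝ => -x :=
      (Homeomorph.neg ℝ).isClosedEmbedding.measurableEmbedding
    have h2 : IntegrableOn (fun t : ℝ => t ^ j * Real.exp (-|t|)) (Iic 0)
        (Measure.map (fun x : ℝ => -x) volume) := by
      rw [m.integrableOn_map_iff]
      have hs : ((fun x : ℝ => -x) ⁻¹' Iic 0) = Ici 0 := by ext x; simp
      rw [hs, integrableOn_Ici_iff_integrableOn_Ioi]
      refine IntegrableOn.congr_fun ((intOnIoi j).const_mul ((-1:ℝ)^j))
        (fun x hx => ?_) measurableSet_Ioi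
      simp only [Function.comp]
      rw [abs_neg, abs_of_pos hx]
      ring
    rwa [Measure.map_neg_eq_self (volume : Measure ℝ)] at h2
  · refine IntegrableOn.congr_fun (intOnIoi j) (fun x hx => ?_) measurableSet_Ioi
    rw [abs_of_pos hx]

noncomputable def cc (j : ℕ) : ℝ := ∫ t : ℝ, t ^ j * Real.exp (-|t|)

lemma cc_val (j : ℕ) : cc j = (1 + (-1:ℝ)^j) * (j.factorial : ℝ) := by
  have hsplit := intervalIntegral.integral_Iic_add_Ioi (b := (0:ℝ)) ((Ig j).integrableOn)
    ((Ig j).integrableOn)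
  rw [cc, ← hsplit]
  have h1 : ∫ t in Iic (0:ℝ), t ^ j * Real.exp (-|t|) = (-1:ℝ)^j * (j.factorial : ℝ) := by
    have := integral_comp_neg_Iic (0:ℝ) (fun t : ℝ => (-t) ^ j * Real.exp (-|t|))
    simp only [abs_neg, neg_neg, neg_zero] at this
    rw [this]
    have h2 : ∫ t in Ioi (0:ℝ), (-t) ^ j * Real.exp (-|t|)
        = (-1:ℝ)^j * ∫ t in Ioi (0:ℝ), t ^ j * Real.exp (-t) := by
      rw [← integral_const_mul]
      refine setIntegral_congr_fun measurableSet_Ioi (fun x hx => ?_)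
      rw [abs_of_pos hx]; ring
    rw [h2, intIoi_val]
  have h2 : ∫ t in Ioi (0:ℝ), t ^ j * Real.exp (-|t|) = (j.factorial : ℝ) := by
    rw [← intIoi_val j]
    refine setIntegral_congr_fun measurableSet_Ioi (fun x hx => ?_)
    rw [abs_of_pos hx]
  rw [h1, h2]; ring


lemma Igshift (j : ℕ) (y : ℝ) : Integrable (fun t : ℝ => (t + y) ^ j * Real.exp (-|t|)) := by
  have h : ∀ t : ℝ, (t + y) ^ j * Real.exp (-|t|)
      = ∑ i ∈ Finset.range (j + 1), (y ^ (j - i) * (j.choose i : ℝ)) * (t ^ i * Real.exp (-|t|)) := by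
    intro t
    rw [add_pow, Finset.sum_mul]
    exact Finset.sum_congr rfl fun i _ => by ring
  simp only [h]
  exact integrable_finset_sum _ (fun i _ => (Ig i).const_mul _)

lemma Igy (k : ℕ) (y : ℝ) : Integrable (fun x : ℝ => x ^ k * Real.exp (-|x - y|)) := by
  have := (Igshift k y).comp_sub_right y
  simpa using this

noncomputable def Mm (k : ℕ) (y : ℝ) : ℝ := ∫ x : ℝ, x ^ k * Real.exp (-|x - y|)

lemma Mm_eq (k : ℕ) (y : ℝ) :
    Mm k y = ∑ i ∈ Finset.range (k + 1), (k.choose i : ℝ) * cc i * y ^ (k - i) := by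
  have h0 : Mm k y = ∫ t : ℝ, (t + y) ^ k * Real.exp (-|t|) := by
    rw [Mm, ← integral_add_right_eq_self (fun x : ℝ => x ^ k * Real.exp (-|x - y|)) y]
    simp
  rw [h0]
  have h : ∀ t : ℝ, (t + y) ^ k * Real.exp (-|t|)
      = ∑ i ∈ Finset.range (k + 1), (y ^ (k - i) * (k.choose i : ℝ)) * (t ^ i * Real.exp (-|t|)) := by
    intro t
    rw [add_pow, Finset.sum_mul]
    exact Finset.sum_congr rfl fun i _ => by ring
  simp only [h]
  rw [integral_finset_sum _ (fun i _ => (Ig i).const_mul _)]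
  exact Finset.sum_congr rfl fun i _ => by rw [integral_const_mul]; unfold cc; ring

lemma cc_one : cc 1 = 0 := by rw [cc_val]; norm_num

lemma cc_rec (j : ℕ) : cc (j + 2) = ((j:ℝ)+2) * ((j:ℝ)+1) * cc j := by
  rw [cc_val, cc_val]
  have h1 : ((j+2).factorial : ℝ) = ((j:ℝ)+2) * ((j:ℝ)+1) * (j.factorial : ℝ) := by
    rw [Nat.factorial_succ, Nat.factorial_succ]; push_cast; ring
  have h2 : (-1:ℝ) ^ (j + 2) = (-1:ℝ) ^ j := by rw [pow_add]; norm_num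
  rw [h1, h2]; ring

lemma Mm_rec (k : ℕ) (y : ℝ) :
    Mm k y = 2 * y ^ k + (k:ℝ) * ((k:ℝ) - 1) * Mm (k - 2) y := by
  match k with
  | 0 => norm_num [Mm_eq, cc_val]
  | 1 =>
      rw [Mm_eq, Mm_eq]
      norm_num [Finset.sum_range_succ, cc_val, cc_one]
  | (m + 2) =>
      rw [show m + 2 - 2 = m from rfl, Mm_eq (m+2), Finset.sum_range_succ',
        Finset.sum_range_succ']
      have e2 : ((m+2).choose 0 : ℝ) * cc 0 * y ^ (m + 2 - 0) = 2 * y ^ (m+2) := by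
        norm_num [cc_val]
      have e3 : ((m+2).choose (0+1) : ℝ) * cc (0+1) * y ^ (m + 2 - (0+1)) = 0 := by
        norm_num [cc_one]
      rw [e2, e3]
      have hsum : ∀ i ∈ Finset.range (m + 1),
          ((m+2).choose (i+1+1) : ℝ) * cc (i+1+1) * y ^ (m + 2 - (i+1+1))
          = ((m:ℝ)+2) * ((m:ℝ)+2-1) * ((m.choose i : ℝ) * cc i * y ^ (m - i)) := by
        intro i _
        have h1 : ((m:ℝ)+2) * ((m+1).choose (i+1) : ℝ) = ((m+2).choose (i+2) : ℝ) * ((i:ℝ)+2) := by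
          exact_mod_cast congrArg (Nat.cast (R := ℝ)) (Nat.add_one_mul_choose_eq (m+1) (i+1))
        have h2 : ((m:ℝ)+1) * (m.choose i : ℝ) = ((m+1).choose (i+1) : ℝ) * ((i:ℝ)+1) := by
          exact_mod_cast congrArg (Nat.cast (R := ℝ)) (Nat.add_one_mul_choose_eq m i)
        have he : m + 2 - (i+1+1) = m - i := by omega
        show ((m+2).choose (i+2) : ℝ) * cc (i+2) * y ^ (m + 2 - (i+1+1)) = _
        rw [he, cc_rec i]
        linear_combination (-(cc i * y ^ (m - i))) * ((((i:ℝ)+1)) * h1 + (((m:ℝ)+2)) * h2)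
      rw [Finset.sum_congr rfl hsum, ← Finset.mul_sum, ← Mm_eq m y]
      push_cast
      ring



lemma Iga (k : ℕ) : Integrable (fun t : ℝ => |t| ^ k * Real.exp (-|t|)) := by
  have := (Ig k).abs
  simpa [abs_mul, abs_pow, abs_of_pos (Real.exp_pos _)] using this

lemma Igya (k : ℕ) (y : ℝ) : Integrable (fun x : ℝ => |x| ^ k * Real.exp (-|x - y|)) := by
  have := (Igy k y).abs
  simpa [abs_mul, abs_pow, abs_of_pos (Real.exp_pos _)] using this

lemma Ie : Integrable (fun t : ℝ => Real.exp (-|t|)) := by simpa using Ig 0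

lemma E2 : ∫ t : ℝ, Real.exp (-|t|) = 2 := by
  have := cc_val 0
  simp only [cc, pow_zero, one_mul] at this
  norm_num at this
  exact this

lemma pow_add_le' (a b : ℝ) (ha : 0 ≤ a) (hb : 0 ≤ b) (k : ℕ) :
    (a + b) ^ k ≤ 2 ^ k * (a ^ k + b ^ k) := by
  calc (a + b) ^ k ≤ (2 * max a b) ^ k := by
        refine pow_le_pow_left₀ (by positivity) ?_ k
        rcases max_cases a b with ⟨h1, h2⟩ | ⟨h1, h2⟩ <;> rw [h1] <;> linarith
    _ = 2 ^ k * (max a b) ^ k := mul_pow 2 _ k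
    _ ≤ 2 ^ k * (a ^ k + b ^ k) := by
        refine mul_le_mul_of_nonneg_left ?_ (by positivity)
        rcases max_cases a b with ⟨h1, h2⟩ | ⟨h1, h2⟩ <;> rw [h1] <;>
          [nlinarith [pow_nonneg hb k]; nlinarith [pow_nonneg ha k]]

noncomputable def Ma (k : ℕ) (y : ℝ) : ℝ := ∫ x : ℝ, |x| ^ k * Real.exp (-|x - y|)

noncomputable def A (k : ℕ) : ℝ := ∫ t : ℝ, |t| ^ k * Real.exp (-|t|)

lemma Ma_nonneg (k : ℕ) (y : ℝ) : 0 ≤ Ma k y :=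
  integral_nonneg fun x => by positivity

lemma Ma_bound (k : ℕ) (y : ℝ) : Ma k y ≤ 2 ^ k * A k + 2 ^ k * |y| ^ k * 2 := by
  have ht : Ma k y = ∫ t : ℝ, |t + y| ^ k * Real.exp (-|t|) := by
    rw [Ma, ← integral_add_right_eq_self (fun x : ℝ => |x| ^ k * Real.exp (-|x - y|)) y]
    simp
  rw [ht]
  have hint : Integrable (fun t : ℝ => |t + y| ^ k * Real.exp (-|t|)) := by
    have := (Igya k y).comp_add_right y
    simpa using this
  have hint2 : Integrable (fun t : ℝ =>
      2 ^ k * (|t| ^ k * Real.exp (-|t|)) + 2 ^ k * |y| ^ k * Real.exp (-|t|)) :=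
    ((Iga k).const_mul _).add (Ie.const_mul _)
  calc ∫ t : ℝ, |t + y| ^ k * Real.exp (-|t|)
      ≤ ∫ t : ℝ, (2 ^ k * (|t| ^ k * Real.exp (-|t|)) + 2 ^ k * |y| ^ k * Real.exp (-|t|)) := by
        refine integral_mono hint hint2 (fun t => ?_)
        have h1 : |t + y| ^ k ≤ 2 ^ k * (|t| ^ k + |y| ^ k) :=
          le_trans (pow_le_pow_left₀ (abs_nonneg _) (abs_add_le t y) k)
            (pow_add_le' |t| |y| (abs_nonneg _) (abs_nonneg _) k)
        have h2 := Real.exp_pos (-|t|)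
        nlinarith [Real.exp_nonneg (-|t|)]
    _ = 2 ^ k * A k + 2 ^ k * |y| ^ k * 2 := by
        rw [integral_add ((Iga k).const_mul _) (Ie.const_mul _), integral_const_mul,
          integral_const_mul, E2, A]


section Key
variable {ρ : ℝ → ℝ} (hpos : ∀ x, 0 ≤ ρ x) (hρ : Integrable ρ)
variable {k : ℕ} (hk : Integrable (fun x : ℝ => |x| ^ k * ρ x))

lemma asmG' (hρ : Integrable ρ) : AEStronglyMeasurable
    (fun p : ℝ × ℝ => |p.2| ^ k * Real.exp (-|p.2 - p.1|) * ρ p.1)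
    ((volume : Measure ℝ).prod volume) := by
  refine AEStronglyMeasurable.mul ?_ hρ.1.comp_fst
  exact Continuous.aestronglyMeasurable (by fun_prop)

lemma asmG (hρ : Integrable ρ) : AEStronglyMeasurable
    (fun p : ℝ × ℝ => p.2 ^ k * Real.exp (-|p.2 - p.1|) * ρ p.1)
    ((volume : Measure ℝ).prod volume) := by
  refine AEStronglyMeasurable.mul ?_ hρ.1.comp_fst
  exact Continuous.aestronglyMeasurable (by fun_prop)

include hpos hρ hk in
lemma intG' : Integrable
    (fun p : ℝ × ℝ => |p.2| ^ k * Real.exp (-|p.2 - p.1|) * ρ p.1)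
    ((volume : Measure ℝ).prod volume) := by
  refine (integrable_prod_iff (asmG' hρ)).2 ⟨?_, ?_⟩
  · exact Filter.Eventually.of_forall fun y => (Igya k y).mul_const (ρ y)
  · have hnormval : ∀ y : ℝ, (∫ x : ℝ, ‖|x| ^ k * Real.exp (-|x - y|) * ρ y‖)
        = Ma k y * ρ y := by
      intro y
      simp only [Ma]
      rw [← integral_mul_const]
      refine integral_congr_ae (Filter.Eventually.of_forall fun x => ?_)
      simp only [norm_eq_abs, abs_mul, abs_pow, abs_abs,
        abs_of_pos (Real.exp_pos _), abs_of_nonneg (hpos y)]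
    simp only [hnormval]
    refine Integrable.mono' (g := fun y => (2 ^ k * A k) * ρ y + (2 ^ k * 2) * (|y| ^ k * ρ y))
      ((hρ.const_mul _).add (hk.const_mul _)) ?_ (Filter.Eventually.of_forall fun y => ?_)
    · refine AEStronglyMeasurable.mul ?_ hρ.1
      have : AEStronglyMeasurable (fun p : ℝ × ℝ =>
          ‖|p.2| ^ k * Real.exp (-|p.2 - p.1|)‖) ((volume : Measure ℝ).prod volume) :=
        (Continuous.aestronglyMeasurable (by fun_prop)).norm
      have h2 := this.integral_prod_right'
      refine h2.congr (Filter.Eventually.of_forall fun y => ?_)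
      simp only [Ma]
      refine integral_congr_ae (Filter.Eventually.of_forall fun x => ?_)
      simp only [norm_eq_abs, abs_mul, abs_pow, abs_abs, abs_of_pos (Real.exp_pos _)]
    · rw [norm_eq_abs, abs_of_nonneg (mul_nonneg (Ma_nonneg k y) (hpos y))]
      have := mul_le_mul_of_nonneg_right (Ma_bound k y) (hpos y)
      beta_reduce
      nlinarith [hpos y, pow_nonneg (abs_nonneg y) k]

include hpos hρ hk in
lemma intG : Integrable
    (fun p : ℝ × ℝ => p.2 ^ k * Real.exp (-|p.2 - p.1|) * ρ p.1)
    ((volume : Measure ℝ).prod volume) := by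
  refine Integrable.mono (intG' hpos hρ hk) (asmG hρ) (Filter.Eventually.of_forall fun p => ?_)
  simp only [norm_eq_abs, abs_mul, abs_pow, abs_abs]
  exact le_refl _

include hpos hρ hk in
lemma schem_abs_int : Integrable (fun x : ℝ => |x| ^ k * Schem ρ x) := by
  have h := (intG' hpos hρ hk).integral_prod_right
  refine (h.const_mul (1/2)).congr (Filter.Eventually.of_forall fun x => ?_)
  show 1/2 * ∫ y : ℝ, |x| ^ k * Real.exp (-|x - y|) * ρ y = |x| ^ k * Schem ρ x
  have e : |x| ^ k * Schem ρ x
      = 1/2 * (|x| ^ k * ∫ y : ℝ, Real.exp (-|x - y|) * ρ y) := by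
    simp only [Schem]; ring
  rw [e, ← integral_const_mul (|x| ^ k)]
  congr 1
  refine integral_congr_ae (Filter.Eventually.of_forall fun y => ?_)
  simp [mul_assoc]

include hpos hρ hk in
lemma schem_int_eq : ∫ x : ℝ, x ^ k * Schem ρ x = (1/2) * ∫ y : ℝ, Mm k y * ρ y := by
  have h1 : ∀ x : ℝ, x ^ k * Schem ρ x
      = (1/2) * ∫ y : ℝ, x ^ k * Real.exp (-|x - y|) * ρ y := by
    intro x
    have e : x ^ k * Schem ρ x
        = 1/2 * (x ^ k * ∫ y : ℝ, Real.exp (-|x - y|) * ρ y) := by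
      simp only [Schem]; ring
    rw [e, ← integral_const_mul (x ^ k)]
    congr 1
    refine integral_congr_ae (Filter.Eventually.of_forall fun y => ?_)
    simp [mul_assoc]
  calc ∫ x : ℝ, x ^ k * Schem ρ x
      = ∫ x : ℝ, (1/2) * ∫ y : ℝ, x ^ k * Real.exp (-|x - y|) * ρ y := by
        exact integral_congr_ae (Filter.Eventually.of_forall fun x => h1 x)
    _ = (1/2) * ∫ x : ℝ, ∫ y : ℝ, x ^ k * Real.exp (-|x - y|) * ρ y := integral_const_mul _ _
    _ = (1/2) * ∫ y : ℝ, ∫ x : ℝ, x ^ k * Real.exp (-|x - y|) * ρ y := by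
        congr 1
        exact integral_integral_swap (intG hpos hρ hk).swap
    _ = (1/2) * ∫ y : ℝ, Mm k y * ρ y := by
        congr 1
        refine integral_congr_ae (Filter.Eventually.of_forall fun y => ?_)
        simp only [Mm]
        rw [← integral_mul_const]

include hpos hρ hk in
lemma intρM : Integrable (fun y : ℝ => Mm k y * ρ y) := by
  have h := (intG hpos hρ hk).integral_prod_left
  refine h.congr (Filter.Eventually.of_forall fun y => ?_)
  simp only [Mm]
  rw [← integral_mul_const]

end Key


end Aux
/-- If the nonnegative density `ρ` has finite moments up to order `N`, then so
has `S[ρ]`, and `S_k = R_k + k(k-1) S_{k-2}` for `k = 0, …, N` (the last term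
vanishing for `k = 0, 1`). -/
theorem Schem_moment_recursion (N : ℕ) (ρ : ℝ → ℝ)
    (hpos : ∀ x, 0 ≤ ρ x)
    (hmom : ∀ k ≤ N, Integrable (fun x : ℝ => |x| ^ k * ρ x)) :
    (∀ k ≤ N, Integrable (fun x : ℝ => |x| ^ k * Schem ρ x)) ∧
    (∀ k ≤ N, ∫ x : ℝ, x ^ k * Schem ρ x =
      (∫ x : ℝ, x ^ k * ρ x) +
        (k : ℝ) * ((k : ℝ) - 1) * ∫ x : ℝ, x ^ (k - 2) * Schem ρ x) := by
  have hρ : Integrable ρ := by simpa using hmom 0 (Nat.zero_le N)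
  constructor
  · exact fun k hk => schem_abs_int hpos hρ (hmom k hk)
  · intro k hk
    have h2 : k - 2 ≤ N := le_trans (Nat.sub_le k 2) hk
    rw [schem_int_eq hpos hρ (hmom k hk), schem_int_eq hpos hρ (hmom (k-2) h2)]
    have hyk : Integrable (fun y : ℝ => y ^ k * ρ y) := by
      refine (hmom k hk).mono'
        (((continuous_pow k).aestronglyMeasurable).mul hρ.1)
        (Filter.Eventually.of_forall fun y => ?_)
      beta_reduce
      rw [norm_eq_abs, abs_mul, abs_pow, abs_of_nonneg (hpos y)]
    have hstep : ∀ y : ℝ, Mm k y * ρ y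
        = 2 * (y ^ k * ρ y) + ((k:ℝ) * ((k:ℝ) - 1)) * (Mm (k-2) y * ρ y) := fun y => by
      rw [Mm_rec k y]; ring
    calc 1/2 * ∫ y : ℝ, Mm k y * ρ y
        = 1/2 * ∫ y : ℝ,
            (2 * (y ^ k * ρ y) + ((k:ℝ) * ((k:ℝ) - 1)) * (Mm (k-2) y * ρ y)) := by
          rw [integral_congr_ae (Filter.Eventually.of_forall hstep)]
      _ = (∫ x : ℝ, x ^ k * ρ x)
          + (k : ℝ) * ((k : ℝ) - 1) * (1/2 * ∫ y : ℝ, Mm (k-2) y * ρ y) := by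
          rw [integral_add (hyk.const_mul 2)
            ((intρM hpos hρ (hmom (k-2) h2)).const_mul _), integral_const_mul,
            integral_const_mul]
          ring
end

section
/- Let M > 2. Then every solution (A_{2,0}, A_{1,1}, A_{0,2}) of the linear ODE system A_{2,0}' = 2A_{1,1}, A_{1,1}' = A_{0,2} − M A_{1,1} − M A_{2,0}, A_{0,2}' = 2M A_{2,0} − M A_{0,2} + 2M² converges as t → ∞ to the unique steady state (A_{2,0}, A_{1,1}, A_{0,2}) = (2M/(M−2), 0, 2M²/(M−2)). -/
set_option maxHeartbeats 1000000

open Filter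

private lemma key_ineq (M q ε x y w : ℝ) (hM : 2 < M) (hq : q = M - 2)
    (hε1 : 0 < ε) (hε2 : ε*(2*q+M^2) ≤ M*q)
    (hε5 : ε ≤ 1) (hε6 : ε ≤ q) (hε7 : ε*M ≤ q) :
    -ε*q*x^2 - (2*M-2*ε)*y^2 - (M/2)*w^2 - ε*M*(x*y) + ε*(x*w)
      + (ε/2)*((q/2)*x^2 + ε*(x*y) + y^2 + w^2/4) ≤ 0 := by
  have hq0 : 0 < q := by rw [hq]; linarith
  have hcx : 0 ≤ ε*q/4*(q-ε) * x^2 :=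
    mul_nonneg (mul_nonneg (by positivity) (by linarith)) (sq_nonneg x)
  have hcy : 0 ≤ (2*M*q - 2*ε*q - ε*M^2 - ε*q/2 - ε^2*q/4) * y^2 := by
    have h1 : 2*ε*q + ε*M^2 ≤ M*q := by nlinarith [hε2]
    have h2 : ε^2 ≤ 1 := by nlinarith [hε1, hε5]
    have : 0 ≤ 2*M*q - 2*ε*q - ε*M^2 - ε*q/2 - ε^2*q/4 := by
      nlinarith [mul_pos hq0 (by linarith : (0:ℝ) < M - 1), mul_nonneg hq0.le (sq_nonneg ε), h2]
    exact mul_nonneg this (sq_nonneg y)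
  have hcw : 0 ≤ (q*M/2 - ε - ε*q/8) * w^2 := by
    have : 0 ≤ q*M/2 - ε - ε*q/8 := by
      nlinarith [mul_le_mul_of_nonneg_left hε7 (le_of_lt hq0),
        mul_le_mul_of_nonneg_left hε7 (by linarith : (0:ℝ) ≤ M),
        mul_pos hq0 hq0, hε7]
    exact mul_nonneg this (sq_nonneg w)
  have hsq1 : 0 ≤ ε * (q*x/2 + M*y)^2 := by positivity
  have hsq2 : 0 ≤ ε * (q*x/2 - w)^2 := by positivity
  have hsq3 : 0 ≤ ε^2*q/4 * (x-y)^2 := by positivity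
  have hmain : 0 ≤ q * (-(-ε*q*x^2 - (2*M-2*ε)*y^2 - (M/2)*w^2 - ε*M*(x*y) + ε*(x*w)
      + (ε/2)*((q/2)*x^2 + ε*(x*y) + y^2 + w^2/4))) := by
    have hid : q * (-(-ε*q*x^2 - (2*M-2*ε)*y^2 - (M/2)*w^2 - ε*M*(x*y) + ε*(x*w)
      + (ε/2)*((q/2)*x^2 + ε*(x*y) + y^2 + w^2/4)))
      = ε * (q*x/2 + M*y)^2 + ε * (q*x/2 - w)^2 + ε^2*q/4 * (x-y)^2
        + ε*q/4*(q-ε) * x^2 + (2*M*q - 2*ε*q - ε*M^2 - ε*q/2 - ε^2*q/4) * y^2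
        + (q*M/2 - ε - ε*q/8) * w^2 := by ring
    rw [hid]; linarith
  nlinarith [hmain, hq0]

private lemma pd_ineq (q ε x y w : ℝ) (hq0 : 0 < q) (hε4 : ε^2 ≤ q/2) :
    q/4*x^2 + 1/2*y^2 + 1/4*w^2 ≤ q/2*x^2 + ε*(x*y) + y^2 + w^2/4 := by
  nlinarith [sq_nonneg (ε*x + y), mul_nonneg (by linarith : (0:ℝ) ≤ q/2 - ε^2) (sq_nonneg x)]

private lemma sq_tendsto_zero {f : ℝ → ℝ} (h : Tendsto (fun t => f t ^ 2) atTop (nhds 0)) :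
    Tendsto f atTop (nhds 0) := by
  rw [tendsto_zero_iff_norm_tendsto_zero]
  have := h.sqrt
  simpa [Real.sqrt_sq_eq_abs, Real.norm_eq_abs] using this

/-- For `M > 2`, every solution of the second-order moment ODE system of Model A
converges to the unique steady state `(2M/(M−2), 0, 2M²/(M−2))`. -/
theorem modelA_moments_converge (M : ℝ) (hM : 2 < M)
    (A20 A11 A02 : ℝ → ℝ)
    (h20 : ∀ t : ℝ, HasDerivAt A20 (2 * A11 t) t)
    (h11 : ∀ t : ℝ, HasDerivAt A11 (A02 t - M * A11 t - M * A20 t) t)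
    (h02 : ∀ t : ℝ, HasDerivAt A02 (2 * M * A20 t - M * A02 t + 2 * M ^ 2) t) :
    Tendsto A20 atTop (nhds (2 * M / (M - 2))) ∧
    Tendsto A11 atTop (nhds 0) ∧
    Tendsto A02 atTop (nhds (2 * M ^ 2 / (M - 2))) ∧
    (∀ x y z : ℝ, 2 * y = 0 → z - M * y - M * x = 0 →
      2 * M * x - M * z + 2 * M ^ 2 = 0 →
      x = 2 * M / (M - 2) ∧ y = 0 ∧ z = 2 * M ^ 2 / (M - 2)) := by
  have hM0 : (0:ℝ) < M := by linarith
  obtain ⟨q, hqdef⟩ : ∃ q : ℝ, q = M - 2 := ⟨_, rfl⟩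
  rw [← hqdef]
  have hq0 : (0:ℝ) < q := by rw [hqdef]; linarith
  have hqne : q ≠ 0 := ne_of_gt hq0
  obtain ⟨ε, hεdef⟩ : ∃ ε : ℝ, ε = M*q/(2*q+M^2+4) := ⟨_, rfl⟩
  have hK : (0:ℝ) < 2*q+M^2+4 := by nlinarith [hq0, sq_nonneg M]
  have hεK : ε * (2*q+M^2+4) = M*q := by
    rw [hεdef, div_mul_cancel₀ _ (ne_of_gt hK)]
  have hε1 : 0 < ε := by rw [hεdef]; exact div_pos (mul_pos hM0 hq0) hK
  have hε2 : ε*(2*q+M^2) ≤ M*q := by nlinarith [hεK, hε1]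
  have hε7 : ε*M ≤ q := by nlinarith [hεK, hε1, hq0, hM0]
  have hε5 : ε ≤ 1 := by nlinarith [hε7, hq0, hM0]
  have hε6 : ε ≤ q := by nlinarith [hε7, hε1, hM0]
  have h2q : (0:ℝ) < M^2 - 2*q := by nlinarith [sq_nonneg (M-1), hqdef, hq0]
  have hε4 : ε^2 ≤ q/2 := by
    nlinarith [mul_le_mul hε7 hε7 (mul_nonneg hε1.le hM0.le) hq0.le,
      mul_pos hq0 h2q, hq0, hε1]
  -- shifted variables
  obtain ⟨X, hXdef⟩ : ∃ X : ℝ → ℝ, X = fun t => A20 t - 2*M/q := ⟨_, rfl⟩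
  obtain ⟨W, hWdef⟩ : ∃ W : ℝ → ℝ, W = fun t => A02 t - 2*A20 t - 2*M := ⟨_, rfl⟩
  have hX : ∀ t, HasDerivAt X (2 * A11 t) t := by
    intro t; rw [hXdef]; exact (h20 t).sub_const _
  have hW : ∀ t, HasDerivAt W (-M * W t - 4 * A11 t) t := by
    intro t
    rw [hWdef]
    have h := ((h02 t).sub ((h20 t).const_mul (2:ℝ))).sub_const (2*M)
    refine h.congr_deriv ?_
    beta_reduce
    ring
  have hY : ∀ t, HasDerivAt A11 ((2-M) * X t - M * A11 t + W t) t := by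
    intro t
    rw [hXdef, hWdef, hqdef]
    convert h11 t using 1
    have : M - 2 ≠ 0 := by linarith
    field_simp
    ring
  -- Lyapunov function
  obtain ⟨V, hVdef⟩ : ∃ V : ℝ → ℝ,
      V = fun t => q/2*(X t)^2 + ε*(X t * A11 t) + (A11 t)^2 + (W t)^2/4 := ⟨_, rfl⟩
  obtain ⟨DV, hDVdef⟩ : ∃ DV : ℝ → ℝ,
      DV = fun t => -ε*q*(X t)^2 - (2*M-2*ε)*(A11 t)^2 - M/2*(W t)^2
        - ε*M*(X t * A11 t) + ε*(X t * W t) := ⟨_, rfl⟩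
  have hV : ∀ t, HasDerivAt V (DV t) t := by
    intro t
    rw [hVdef]
    have h1 := ((hX t).pow 2).const_mul (q/2)
    have h2 := ((hX t).mul (hY t)).const_mul ε
    have h3 := (hY t).pow 2
    have h4 := ((hW t).pow 2).div_const 4
    have h5 := ((h1.add h2).add h3).add h4
    refine h5.congr_deriv ?_
    simp only [hDVdef]
    rw [hqdef]
    push_cast
    ring
  have hkey : ∀ t, DV t + ε/2 * V t ≤ 0 := by
    intro t
    have h := key_ineq M q ε (X t) (A11 t) (W t) hM hqdef hε1 hε2 hε5 hε6 hε7
    simp only [hDVdef, hVdef]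
    linarith [h]
  -- Gronwall
  obtain ⟨G, hGdef⟩ : ∃ G : ℝ → ℝ, G = fun t => Real.exp (ε/2 * t) * V t := ⟨_, rfl⟩
  have hG : ∀ t, HasDerivAt G (Real.exp (ε/2 * t) * (ε/2 * V t + DV t)) t := by
    intro t
    rw [hGdef]
    have he := ((hasDerivAt_id t).const_mul (ε/2)).exp
    have h2 := he.mul (hV t)
    refine h2.congr_deriv ?_
    simp only [id_eq]
    ring
  have hGanti : Antitone G := by
    apply antitone_of_deriv_nonpos
    · exact fun t => (hG t).differentiableAt
    · intro t
      rw [(hG t).deriv]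
      exact mul_nonpos_of_nonneg_of_nonpos (Real.exp_pos _).le
        (by linarith [hkey t])
  have hVle : ∀ t, 0 ≤ t → V t ≤ V 0 * Real.exp (-(ε/2*t)) := by
    intro t ht
    have h := hGanti ht
    simp only [hGdef] at h
    have h' : Real.exp (ε/2*t) * V t ≤ V 0 := by
      simpa [Real.exp_zero] using h
    have hepos := Real.exp_pos (ε/2*t)
    calc V t = (Real.exp (ε/2*t) * V t) * (Real.exp (ε/2*t))⁻¹ := by field_simp
      _ ≤ V 0 * (Real.exp (ε/2*t))⁻¹ :=
          mul_le_mul_of_nonneg_right h' (by positivity)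
      _ = V 0 * Real.exp (-(ε/2*t)) := by rw [Real.exp_neg]
  have hpd : ∀ t, q/4*(X t)^2 + 1/2*(A11 t)^2 + 1/4*(W t)^2 ≤ V t := by
    intro t
    simp only [hVdef]
    exact pd_ineq q ε (X t) (A11 t) (W t) hq0 hε4
  have hVnn : ∀ t, 0 ≤ V t := by
    intro t
    have h := hpd t
    nlinarith [mul_nonneg hq0.le (sq_nonneg (X t)), sq_nonneg (A11 t), sq_nonneg (W t)]
  have hexp0 : Tendsto (fun t : ℝ => V 0 * Real.exp (-(ε/2*t))) atTop (nhds 0) := by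
    have h1 : Tendsto (fun t : ℝ => ε/2*t) atTop atTop :=
      Tendsto.const_mul_atTop (by linarith) tendsto_id
    have h2 := Real.tendsto_exp_neg_atTop_nhds_zero.comp h1
    have h3 := h2.const_mul (V 0)
    simpa [Function.comp] using h3
  have hVtend : Tendsto V atTop (nhds 0) := by
    apply tendsto_of_tendsto_of_tendsto_of_le_of_le' tendsto_const_nhds hexp0
    · exact Eventually.of_forall hVnn
    · filter_upwards [eventually_ge_atTop (0:ℝ)] with t ht using hVle t ht
  -- component limits
  have hsq : ∀ (f : ℝ → ℝ) (c : ℝ), (∀ t, f t ^ 2 ≤ c * V t) → Tendsto f atTop (nhds 0) := by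
    intro f c hfc
    apply sq_tendsto_zero
    have hc : Tendsto (fun t => c * V t) atTop (nhds 0) := by
      have := hVtend.const_mul c
      simpa using this
    apply tendsto_of_tendsto_of_tendsto_of_le_of_le' tendsto_const_nhds hc
    · exact Eventually.of_forall fun t => sq_nonneg _
    · exact Eventually.of_forall hfc
  have hXt : Tendsto X atTop (nhds 0) := by
    apply hsq X (4/q)
    intro t
    have h4 : q * (X t)^2 ≤ 4 * V t := by
      have h := hpd t
      nlinarith [sq_nonneg (A11 t), sq_nonneg (W t)]
    rw [div_mul_eq_mul_div, le_div_iff₀ hq0]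
    linarith
  have hYt : Tendsto A11 atTop (nhds 0) := by
    apply hsq A11 2
    intro t
    have h := hpd t
    nlinarith [sq_nonneg (W t), mul_nonneg hq0.le (sq_nonneg (X t))]
  have hWt : Tendsto W atTop (nhds 0) := by
    apply hsq W 4
    intro t
    have h := hpd t
    nlinarith [sq_nonneg (A11 t), mul_nonneg hq0.le (sq_nonneg (X t))]
  have hA20tend : Tendsto A20 atTop (nhds (2*M/q)) := by
    have h1 : Tendsto (fun t => X t + 2*M/q) atTop (nhds (0 + 2*M/q)) := hXt.add_const _
    have h2 : (fun t => X t + 2*M/q) = A20 := by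
      funext t; simp [hXdef]
    rw [h2] at h1
    simpa using h1
  have hA02tend : Tendsto A02 atTop (nhds (2*M^2/q)) := by
    have h1 : Tendsto (fun t => W t + 2*A20 t + 2*M) atTop (nhds (0 + 2*(2*M/q) + 2*M)) :=
      (hWt.add (hA20tend.const_mul 2)).add_const _
    have h2 : (fun t => W t + 2*A20 t + 2*M) = A02 := by
      funext t; simp [hWdef]; ring
    have h3 : 0 + 2*(2*M/q) + 2*M = 2*M^2/q := by
      rw [hqdef]
      have : M - 2 ≠ 0 := by linarith
      field_simp
      ring
    rw [h2, h3] at h1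
    exact h1
  refine ⟨hA20tend, hYt, hA02tend, ?_⟩
  intro x y z h1 h2 h3
  have hy : y = 0 := by linarith
  subst hy
  have hz : z = M * x := by linarith
  subst hz
  have h4 : M * ((M-2)*x - 2*M) = 0 := by linear_combination -h3
  have h5 : (M-2)*x - 2*M = 0 := by
    rcases mul_eq_zero.1 h4 with h | h
    · linarith
    · exact h
  have hx : x = 2*M/q := by
    rw [hqdef]
    have : M - 2 ≠ 0 := by linarith
    field_simp
    linarith
  refine ⟨hx, rfl, ?_⟩
  rw [hx, hqdef]
  have : M - 2 ≠ 0 := by linarith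
  field_simp
end

section
/- For N ∈ ℕ, N ≥ 1, and M > 0, define the polynomial p_N(λ) = −λ(−M−λ)^N + M·N!·Σ_{n=0}^{N−1} (−M−λ)^n/n! + (−1)^N M·N!. Then for each fixed M > 0 there exists N₀ ∈ ℕ such that for all N ≥ N₀ the polynomial p_N has at least one real positive root. -/
/-- The characteristic polynomial `p_N` of the `N`-th order moment system of Model A:
`p_N(λ) = −λ(−M−λ)^N + M·N!·Σ_{n=0}^{N−1} (−M−λ)^n/n! + (−1)^N M·N!` (real version). -/
noncomputable def pCharAR (N : ℕ) (M : ℝ) (x : ℝ) : ℝ :=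
  -x * (-M - x) ^ N +
    M * (N.factorial : ℝ) *
      ∑ n ∈ Finset.range N, (-M - x) ^ n / (n.factorial : ℝ) +
    (-1) ^ N * M * (N.factorial : ℝ)

open Filter Finset Topology

/-- For each fixed mass `M > 0` and all large enough `N`, the polynomial `p_N` has at
least one positive (real) root. -/
theorem pCharA_unstable_for_large_order (M : ℝ) (hM : 0 < M) :
    ∃ N₀ : ℕ, 1 ≤ N₀ ∧ ∀ N : ℕ, N₀ ≤ N → ∃ x : ℝ, 0 < x ∧ pCharAR N M x = 0 := by
  set S : ℕ → ℝ := fun N => ∑ n ∈ Finset.range N, (-M) ^ n / (n.factorial : ℝ) with hS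
  have hsum : Tendsto S atTop (𝓝 (Real.exp (-M))) := by
    have := (NormedSpace.expSeries_div_hasSum_exp (-M)).tendsto_sum_nat
    rw [Real.exp_eq_exp_ℝ]
    exact this
  have h0 : (0:ℝ) < Real.exp (-M) := Real.exp_pos _
  have h1 : Real.exp (-M) < 1 := by
    rw [Real.exp_lt_one_iff]; linarith
  have hev : ∀ᶠ N in atTop, 0 < S N ∧ S N < 1 :=
    (hsum.eventually (eventually_gt_nhds h0)).and (hsum.eventually (eventually_lt_nhds h1))
  obtain ⟨N₁, hN₁⟩ := hev.exists_forall_of_atTop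
  refine ⟨max N₁ 1, le_max_right _ _, fun N hN => ?_⟩
  have hN1 : 1 ≤ N := le_trans (le_max_right _ _) hN
  obtain ⟨hSpos, hSlt⟩ := hN₁ N (le_trans (le_max_left _ _) hN)
  -- setup
  set F : ℝ := (N.factorial : ℝ) with hF
  have hFpos : (0:ℝ) < F := by positivity
  set x₁ : ℝ := M * F * N + M * F + 1 with hx₁
  have hx₁pos : 0 < x₁ := by positivity
  set y : ℝ := M + x₁ with hy
  have hy1 : (1:ℝ) ≤ y := by
    have : 0 ≤ M * F * N + M * F := by positivity
    simp only [hy, hx₁]; linarith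
  have hypos : (0:ℝ) < y := lt_of_lt_of_le one_pos hy1
  set g : ℝ → ℝ := fun x => (-1 : ℝ) ^ N * pCharAR N M x with hg
  -- value at 0
  have hsign : (-1:ℝ)^N * (-1:ℝ)^N = 1 := by
    rw [← pow_add]; exact Even.neg_one_pow ⟨N, rfl⟩
  have hg0 : 0 < g 0 := by
    have heq : g 0 = M * F * ((-1:ℝ)^N * S N + 1) := by
      simp only [hg, pCharAR, hS, hF, sub_zero, neg_zero, zero_mul]
      linear_combination (M * (N.factorial : ℝ)) * hsign
    rw [heq]
    have habs : |(-1:ℝ)^N * S N| = S N := by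
      rw [abs_mul, abs_pow, abs_neg, abs_one, one_pow, one_mul, abs_of_pos hSpos]
    have ht : (-1:ℝ) < (-1:ℝ)^N * S N := by
      have := neg_abs_le ((-1:ℝ)^N * S N)
      rw [habs] at this
      linarith
    nlinarith [mul_pos hM hFpos]
  -- bound the sum at x₁
  have hsumbound : |∑ n ∈ Finset.range N, (-M - x₁) ^ n / (n.factorial : ℝ)| ≤ N * y ^ N := by
    calc |∑ n ∈ Finset.range N, (-M - x₁) ^ n / (n.factorial : ℝ)|
        ≤ ∑ n ∈ Finset.range N, |(-M - x₁) ^ n / (n.factorial : ℝ)| :=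
          Finset.abs_sum_le_sum_abs _ _
      _ ≤ ∑ _n ∈ Finset.range N, y ^ N := by
          apply Finset.sum_le_sum
          intro n hn
          rw [abs_div, abs_pow]
          have h1 : |(-M - x₁)| = y := by
            rw [show -M - x₁ = -y by simp [hy]; ring, abs_neg, abs_of_pos hypos]
          rw [h1, abs_of_pos (by positivity : (0:ℝ) < (n.factorial : ℝ))]
          have hfac : (1:ℝ) ≤ (n.factorial : ℝ) := by
            exact_mod_cast Nat.one_le_iff_ne_zero.mpr (Nat.factorial_ne_zero n)
          calc y ^ n / (n.factorial : ℝ) ≤ y ^ n := div_le_self (by positivity) hfac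
            _ ≤ y ^ N := pow_le_pow_right₀ hy1 (le_of_lt (Finset.mem_range.mp hn))
      _ = N * y ^ N := by rw [Finset.sum_const, Finset.card_range, nsmul_eq_mul]
  -- value at x₁
  have hyN1 : (1:ℝ) ≤ y ^ N := one_le_pow₀ hy1
  have hgx : g x₁ < 0 := by
    have hrw : g x₁ = -x₁ * y ^ N +
        ((-1:ℝ)^N * (M * F * ∑ n ∈ Finset.range N, (-M - x₁) ^ n / (n.factorial : ℝ)) + M * F) := by
      simp only [hg, pCharAR, hF]
      have : (-M - x₁ : ℝ) = -y := by simp [hy]; ring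
      rw [this, neg_pow y N]
      linear_combination (-x₁ * y ^ N + M * (N.factorial : ℝ)) * hsign
    rw [hrw]
    have hb : (-1:ℝ)^N * (M * F * ∑ n ∈ Finset.range N, (-M - x₁) ^ n / (n.factorial : ℝ))
        ≤ M * F * (N * y ^ N) := by
      calc (-1:ℝ)^N * (M * F * ∑ n ∈ Finset.range N, (-M - x₁) ^ n / (n.factorial : ℝ))
          ≤ |(-1:ℝ)^N * (M * F * ∑ n ∈ Finset.range N, (-M - x₁) ^ n / (n.factorial : ℝ))| :=
            le_abs_self _
        _ = M * F * |∑ n ∈ Finset.range N, (-M - x₁) ^ n / (n.factorial : ℝ)| := by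
            rw [abs_mul, abs_mul, abs_pow, abs_neg, abs_one, one_pow, one_mul,
              abs_mul, abs_of_pos hM, abs_of_pos hFpos]
        _ ≤ M * F * (N * y ^ N) := by
            apply mul_le_mul_of_nonneg_left hsumbound (by positivity)
    have hMF : M * F ≤ M * F * y ^ N := le_mul_of_one_le_right (by positivity) hyN1
    have hxy : x₁ * y ^ N = M * F * (N * y ^ N) + M * F * y ^ N + y ^ N := by
      simp only [hx₁]; ring
    nlinarith
  -- IVT
  have hcont : Continuous g := by
    simp only [hg, pCharAR]
    fun_prop
  have hIVT := intermediate_value_Icc' (le_of_lt hx₁pos) hcont.continuousOn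
  have h0mem : (0:ℝ) ∈ Set.Icc (g x₁) (g 0) := ⟨le_of_lt hgx, le_of_lt hg0⟩
  obtain ⟨c, hcmem, hc⟩ := hIVT h0mem
  refine ⟨c, ?_, ?_⟩
  · rcases lt_or_eq_of_le hcmem.1 with h | h
    · exact h
    · exfalso; subst h; rw [hc] at hg0; exact lt_irrefl _ hg0
  · have : (-1:ℝ)^N * pCharAR N M c = 0 := hc
    have hne : ((-1:ℝ)^N) ≠ 0 := by
      apply pow_ne_zero; norm_num
    exact (mul_eq_zero.mp this).resolve_left hne
end

section
/- For all real ξ, k and all s ≥ 0, the inequality (1 + (ξ(1+s) − k)²)(1 + (ξs − k)²) ≥ 1 + ξ²/5 + k²/(5(2s+1)²) holds; consequently (1 + ξ² + k²) / ((2s+1)² (1 + (ξ(1+s) − k)²)(1 + (ξs − k)²)) ≤ 5 for all real ξ, k and s ≥ 0. -/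
/-- The elementary inequality used to bootstrap Fourier decay of stationary solutions
of Model A: for all real `ξ, k` and `s ≥ 0`,
`(1+(ξ(1+s)−k)²)(1+(ξs−k)²) ≥ 1 + ξ²/5 + k²/(5(2s+1)²)`, and consequently
`(1+ξ²+k²) / ((2s+1)²(1+(ξ(1+s)−k)²)(1+(ξs−k)²)) ≤ 5`. -/
theorem fourier_decay_key_inequality (ξ k s : ℝ) (hs : 0 ≤ s) :
    1 + ξ ^ 2 / 5 + k ^ 2 / (5 * (2 * s + 1) ^ 2) ≤
      (1 + (ξ * (1 + s) - k) ^ 2) * (1 + (ξ * s - k) ^ 2) ∧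
    (1 + ξ ^ 2 + k ^ 2) /
        ((2 * s + 1) ^ 2 * (1 + (ξ * (1 + s) - k) ^ 2) * (1 + (ξ * s - k) ^ 2)) ≤ 5 := by
  set a := ξ * (1 + s) - k with ha
  set b := ξ * s - k with hb
  have hd : (0:ℝ) < (2 * s + 1) ^ 2 := by positivity
  have key : 5 * (2 * s + 1) ^ 2 + (2 * s + 1) ^ 2 * ξ ^ 2 + k ^ 2 ≤
      5 * (2 * s + 1) ^ 2 * ((1 + a ^ 2) * (1 + b ^ 2)) := by
    have hk : k = a * s - b * (1 + s) := by rw [ha, hb]; ring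
    have hx : ξ = a - b := by rw [ha, hb]; ring
    rw [hk, hx]
    nlinarith [sq_nonneg (a * (1 + s) + b * s), sq_nonneg (a + b), sq_nonneg (a - b),
      sq_nonneg (a * b), mul_nonneg hs (sq_nonneg a), mul_nonneg hs (sq_nonneg b),
      mul_nonneg (mul_nonneg hs hs) (sq_nonneg a), mul_nonneg (mul_nonneg hs hs) (sq_nonneg b),
      mul_nonneg (mul_nonneg hs hs) (sq_nonneg (a*b)), mul_nonneg hs (sq_nonneg (a*b)),
      mul_nonneg (mul_nonneg hs hs) (sq_nonneg (a+b)), mul_nonneg hs (sq_nonneg (a+b)),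
      mul_nonneg (mul_nonneg hs hs) (sq_nonneg (a-b)), mul_nonneg hs (sq_nonneg (a-b)),
      sq_nonneg a, sq_nonneg b]
  constructor
  · have heq : 1 + ξ ^ 2 / 5 + k ^ 2 / (5 * (2 * s + 1) ^ 2) =
        (5 * (2 * s + 1) ^ 2 + (2 * s + 1) ^ 2 * ξ ^ 2 + k ^ 2) / (5 * (2 * s + 1) ^ 2) := by
      field_simp
    rw [heq, div_le_iff₀ (by positivity)]
    linarith [key]
  · rw [div_le_iff₀ (by positivity), mul_assoc]
    nlinarith [key, hd, sq_nonneg ξ, mul_nonneg (mul_nonneg hs hs) (sq_nonneg ξ),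
      mul_nonneg hs (sq_nonneg ξ)]
end
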